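/- For all n ≥ 1, ∑_{i=0}^{⌊n/2⌋} i·(n/(n-i))·C(n-i, i)·h^{n-2i} = (n/2)·(L_{h,n} − h·F_{h,n}). -/

import Mathlib

open Finset

/-- Incomplete h-Fibonacci polynomials: F_{h,n}^l = ∑_{i=0}^l C(n-1-i,i) h^(n-1-2i). -/
noncomputable def incF (h : ℝ) (n l : ℕ) : ℝ :=
  ∑ i ∈ Finset.range (l + 1), (Nat.choose (n - 1 - i) i : ℝ) * h ^ (n - 1 - 2 * i)

/-- Incomplete h-Lucas polynomials: L_{h,n}^l = ∑_{i=0}^l (n/(n-i)) C(n-i,i) h^(n-2i). -/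
noncomputable def incL (h : ℝ) (n l : ℕ) : ℝ :=
  ∑ i ∈ Finset.range (l + 1), ((n : ℝ) / ((n - i : ℕ) : ℝ)) * (Nat.choose (n - i) i : ℝ) * h ^ (n - 2 * i)

/-- h-Fibonacci sequence. -/
noncomputable def Fh (h : ℝ) : ℕ → ℝ
  | 0 => 0
  | 1 => 1
  | n + 2 => h * Fh h (n + 1) + Fh h n

/-- h-Lucas sequence. -/
noncomputable def Lh (h : ℝ) : ℕ → ℝ
  | 0 => 2
  | 1 => h
  | n + 2 => h * Lh h (n + 1) + Lh h n

noncomputable def Tb (h : ℝ) (m : ℕ) : ℝ :=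
  ∑ i ∈ Finset.range (m + 1), (Nat.choose (m - i) i : ℝ) * h ^ (m - 2 * i)

lemma choose_zero_of (m i : ℕ) (hlt : m < 2 * i) : Nat.choose (m - i) i = 0 :=
  Nat.choose_eq_zero_of_lt (by omega)

lemma Tb_rec (h : ℝ) (m : ℕ) : Tb h (m + 2) = h * Tb h (m + 1) + Tb h m := by
  have h2 : h * Tb h (m + 1)
      = h ^ (m + 2) + ∑ i ∈ Finset.range (m + 1),
          (Nat.choose (m - i) (i + 1) : ℝ) * h ^ (m - 2 * i) := by
    rw [Tb, Finset.mul_sum]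
    have e : ∀ j ∈ Finset.range (m + 2),
        h * ((Nat.choose (m + 1 - j) j : ℝ) * h ^ (m + 1 - 2 * j))
          = (Nat.choose (m + 1 - j) j : ℝ) * h ^ (m + 2 - 2 * j) := by
      intro j hj
      by_cases hc : 2 * j ≤ m + 1
      · rw [show m + 2 - 2 * j = (m + 1 - 2 * j) + 1 by omega]; ring
      · rw [Nat.choose_eq_zero_of_lt (show m + 1 - j < j by omega)]; simp
    rw [Finset.sum_congr rfl e, Finset.sum_range_succ']
    have e2 : ∀ i ∈ Finset.range (m + 1),
        (Nat.choose (m + 1 - (i + 1)) (i + 1) : ℝ) * h ^ (m + 2 - 2 * (i + 1))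
          = (Nat.choose (m - i) (i + 1) : ℝ) * h ^ (m - 2 * i) := by
      intro i _
      rw [show m + 1 - (i + 1) = m - i by omega, show m + 2 - 2 * (i + 1) = m - 2 * i by omega]
    rw [Finset.sum_congr rfl e2]
    simp only [Nat.choose_zero_right, Nat.cast_one, one_mul, Nat.mul_zero, Nat.sub_zero]
    ring
  have h1 : Tb h (m + 2)
      = h ^ (m + 2) + (∑ i ∈ Finset.range (m + 1),
          (Nat.choose (m - i) (i + 1) : ℝ) * h ^ (m - 2 * i)) + Tb h m := by
    rw [Tb, Finset.sum_range_succ']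
    have e : ∀ i ∈ Finset.range (m + 2),
        (Nat.choose (m + 2 - (i + 1)) (i + 1) : ℝ) * h ^ (m + 2 - 2 * (i + 1))
          = (Nat.choose (m - i) (i + 1) : ℝ) * h ^ (m - 2 * i)
            + (Nat.choose (m - i) i : ℝ) * h ^ (m - 2 * i) := by
      intro i hi
      simp only [Finset.mem_range] at hi
      rw [show m + 2 - 2 * (i + 1) = m - 2 * i by omega]
      by_cases hc : i ≤ m
      · rw [show m + 2 - (i + 1) = (m - i) + 1 by omega, Nat.choose_succ_succ]
        push_cast; ring
      · rw [show m + 2 - (i + 1) = 0 by omega, show m - i = 0 by omega]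
        rw [Nat.choose_eq_zero_of_lt (by omega : (0:ℕ) < i + 1),
          Nat.choose_eq_zero_of_lt (by omega : (0:ℕ) < i)]
        simp
    rw [Finset.sum_congr rfl e, Finset.sum_add_distrib]
    have e3 : ∑ i ∈ Finset.range (m + 2), (Nat.choose (m - i) i : ℝ) * h ^ (m - 2 * i)
        = Tb h m := by
      rw [Tb, Finset.sum_range_succ, show m - (m + 1) = 0 by omega,
        Nat.choose_eq_zero_of_lt (by omega : (0:ℕ) < m + 1)]
      simp
    have e4 : ∑ i ∈ Finset.range (m + 2), (Nat.choose (m - i) (i + 1) : ℝ) * h ^ (m - 2 * i)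
        = ∑ i ∈ Finset.range (m + 1), (Nat.choose (m - i) (i + 1) : ℝ) * h ^ (m - 2 * i) := by
      rw [Finset.sum_range_succ, show m - (m + 1) = 0 by omega,
        Nat.choose_eq_zero_of_lt (by omega : (0:ℕ) < m + 2)]
      simp
    rw [e4, e3]
    simp only [Nat.choose_zero_right, Nat.cast_one, one_mul, Nat.mul_zero, Nat.sub_zero]
    ring
  rw [h1, h2]

lemma Fh_eq_Tb (h : ℝ) : ∀ m, Fh h (m + 1) = Tb h m := by
  intro m
  induction m using Nat.twoStepInduction with
  | zero => simp [Fh, Tb]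
  | one => simp [Fh, Tb, Finset.sum_range_succ]
  | more m ih1 ih2 =>
    have : Fh h (m + 3) = h * Fh h (m + 2) + Fh h (m + 1) := rfl
    rw [show m + 2 + 1 = m + 3 from rfl, this, ih1, ih2, Tb_rec]

lemma Lh_eq (h : ℝ) : ∀ m, Lh h (m + 1) = h * Fh h (m + 1) + 2 * Fh h m := by
  intro m
  induction m using Nat.twoStepInduction with
  | zero => simp [Lh, Fh]
  | one =>
    show h * Lh h 1 + Lh h 0 = h * (h * Fh h 1 + Fh h 0) + 2 * Fh h 1
    simp only [Lh, Fh]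
    ring
  | more m ih1 ih2 =>
    have e1 : Lh h (m + 3) = h * Lh h (m + 2) + Lh h (m + 1) := rfl
    have e2 : Fh h (m + 3) = h * Fh h (m + 2) + Fh h (m + 1) := rfl
    have e3 : Fh h (m + 2) = h * Fh h (m + 1) + Fh h m := rfl
    rw [show m + 2 + 1 = m + 3 from rfl, e1, e2, ih1, ih2, e3]
    ring

theorem weighted_sum_incL (h : ℝ) (n : ℕ) (hn : 1 ≤ n) :
    ∑ i ∈ Finset.range (n / 2 + 1),
        (i : ℝ) * ((n : ℝ) / ((n - i : ℕ) : ℝ)) * (Nat.choose (n - i) i : ℝ) * h ^ (n - 2 * i) =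
      ((n : ℝ) / 2) * (Lh h n - h * Fh h n) := by
  rcases n with _ | _ | m
  · omega
  · simp [Lh, Fh]
  · -- n = m + 2
    rw [Finset.sum_range_succ']
    have hterm : ∀ i ∈ Finset.range ((m + 2) / 2),
        ((i + 1 : ℕ) : ℝ) * (((m + 2 : ℕ) : ℝ) / (((m + 2) - (i + 1) : ℕ) : ℝ))
            * (Nat.choose ((m + 2) - (i + 1)) (i + 1) : ℝ) * h ^ ((m + 2) - 2 * (i + 1))
          = ((m + 2 : ℕ) : ℝ) * ((Nat.choose (m - i) i : ℝ) * h ^ (m - 2 * i)) := by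
      intro i hi
      simp only [Finset.mem_range] at hi
      have hi2 : 2 * (i + 1) ≤ m + 2 := by omega
      have ha : (m + 2) - (i + 1) = m + 1 - i := by omega
      have hb : (m + 2) - 2 * (i + 1) = m - 2 * i := by omega
      have hnat : (m + 1 - i) * Nat.choose (m - i) i = Nat.choose (m + 1 - i) (i + 1) * (i + 1) := by
        have := Nat.add_one_mul_choose_eq (m - i) i
        try simp only [Nat.succ_eq_add_one] at this
        rwa [show m - i + 1 = m + 1 - i by omega] at this
      have hd : ((m : ℝ) + 1 - (i : ℝ)) ≠ 0 := by
        have : (i : ℝ) ≤ (m : ℝ) := by exact_mod_cast (show i ≤ m by omega)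
        linarith
      rw [ha, hb]
      have hcast : ((m + 1 - i : ℕ) : ℝ) * (Nat.choose (m - i) i : ℝ)
          = (Nat.choose (m + 1 - i) (i + 1) : ℝ) * ((i : ℝ) + 1) := by
        exact_mod_cast congrArg (Nat.cast : ℕ → ℝ) hnat
      push_cast [Nat.cast_sub (show i ≤ m + 1 by omega)] at hcast ⊢
      field_simp
      linear_combination (-(h ^ (m - 2 * i))) * hcast
    rw [Finset.sum_congr rfl hterm, ← Finset.mul_sum]
    have hsub : ∑ i ∈ Finset.range ((m + 2) / 2), (Nat.choose (m - i) i : ℝ) * h ^ (m - 2 * i)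
        = Tb h m := by
      rw [Tb]
      apply Finset.sum_subset (Finset.range_subset_range.2 (by omega))
      intro j _ hj
      simp only [Finset.mem_range, not_lt] at hj
      rw [choose_zero_of m j (by omega)]
      simp
    rw [hsub, ← Fh_eq_Tb]
    rw [show m + 2 = (m + 1) + 1 from rfl, Lh_eq]
    push_cast
    ring
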